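/- Let Φ = (G, φ) be a T-gain graph on a connected graph. Then Φ is balanced if and only if the associated complete T-gain graph K^{D^max}(Φ) is balanced; equivalently, if and only if D^max(Φ) = D^min(Φ) and K^D(Φ) is balanced. -/

import Mathlib

open Matrix
open scoped Classical

noncomputable section

namespace GG

variable {V : Type*}

/-- The gain of a walk: product of the gains of its oriented edges. -/
def walkGain {G : SimpleGraph V} (φ : V → V → ℂ) {u v : V} (p : G.Walk u v) : ℂ :=
  (p.darts.map (fun d => φ d.toProd.1 d.toProd.2)).prod

/-- `φ` is a `𝕋`-gain function on `G`: unit modulus on edges, inverse under reversal. -/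
def IsGain (G : SimpleGraph V) (φ : V → V → ℂ) : Prop :=
  (∀ i j, G.Adj i j → ‖φ i j‖ = 1) ∧ (∀ i j, G.Adj i j → φ j i = (φ i j)⁻¹)

/-- Adjacency matrix of a gain graph. -/
def gainAdj [Fintype V] [DecidableEq V] (G : SimpleGraph V) (φ : V → V → ℂ) :
    Matrix V V ℂ := fun i j => if G.Adj i j then φ i j else 0

/-- A gain graph is balanced if every cycle has gain 1. -/
def GBalanced (G : SimpleGraph V) (φ : V → V → ℂ) : Prop :=
  ∀ (u : V) (c : G.Walk u u), c.IsCycle → walkGain φ c = 1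

/-- All shortest paths between any pair of vertices have the same gain. -/
def DistCompatible (G : SimpleGraph V) (φ : V → V → ℂ) : Prop :=
  ∀ (s t : V) (p q : G.Walk s t), p.length = G.dist s t → q.length = G.dist s t →
    walkGain φ p = walkGain φ q

/-- The set of gains of shortest `s`-`t` paths. -/
def shortestGains (G : SimpleGraph V) (φ : V → V → ℂ) (s t : V) : Set ℂ :=
  {z | ∃ p : G.Walk s t, p.length = G.dist s t ∧ walkGain φ p = z}

/-- The element of `S` maximizing the real part, ties broken by maximal imaginary part
(correct for finite nonempty sets of gains). -/
def lexMaxGain (S : Set ℂ) : ℂ :=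
  ⟨sSup (Complex.re '' S), sSup (Complex.im '' {z ∈ S | z.re = sSup (Complex.re '' S)})⟩

/-- The element of `S` minimizing the real part, ties broken by minimal imaginary part. -/
def lexMinGain (S : Set ℂ) : ℂ :=
  ⟨sInf (Complex.re '' S), sInf (Complex.im '' {z ∈ S | z.re = sInf (Complex.re '' S)})⟩

/-- The maximum gain distance matrix `D^max_<(Φ)` with respect to a strict order `lt`. -/
def Dmax [Fintype V] [DecidableEq V] (G : SimpleGraph V) (φ : V → V → ℂ)
    (lt : V → V → Prop) : Matrix V V ℂ := fun s t =>
  if lt s t then lexMaxGain (shortestGains G φ s t) * (G.dist s t : ℂ)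
  else if lt t s then (starRingEnd ℂ) (lexMaxGain (shortestGains G φ t s)) * (G.dist s t : ℂ)
  else 0

/-- The minimum gain distance matrix `D^min_<(Φ)` with respect to a strict order `lt`. -/
def Dmin [Fintype V] [DecidableEq V] (G : SimpleGraph V) (φ : V → V → ℂ)
    (lt : V → V → Prop) : Matrix V V ℂ := fun s t =>
  if lt s t then lexMinGain (shortestGains G φ s t) * (G.dist s t : ℂ)
  else if lt t s then (starRingEnd ℂ) (lexMinGain (shortestGains G φ t s)) * (G.dist s t : ℂ)
  else 0

/-- Vertex order independence: the gain distance matrices agree for the standard order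
and its reverse. -/
def OrderIndependent [Fintype V] [DecidableEq V] [LinearOrder V] (G : SimpleGraph V)
    (φ : V → V → ℂ) : Prop :=
  Dmax G φ (· < ·) = Dmax G φ (fun a b => b < a) ∧
  Dmin G φ (· < ·) = Dmin G φ (fun a b => b < a)

/-- The largest (real) eigenvalue of a matrix. -/
def maxEig [Fintype V] [DecidableEq V] (A : Matrix V V ℂ) : ℝ :=
  sSup {r : ℝ | (r : ℂ) ∈ spectrum ℂ A}

/-- The spectral radius of a matrix. -/
def specRad [Fintype V] [DecidableEq V] (A : Matrix V V ℂ) : ℝ :=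
  sSup {r : ℝ | ∃ z ∈ spectrum ℂ A, ‖z‖ = r}

/-- The distance matrix of the underlying graph, as a complex matrix. -/
def distMatrix [Fintype V] [DecidableEq V] (G : SimpleGraph V) : Matrix V V ℂ :=
  fun i j => (G.dist i j : ℂ)

/-- Weighted gain adjacency matrix `A(Φ_w)`. -/
def wGainAdj [Fintype V] [DecidableEq V] (G : SimpleGraph V) (φ : V → V → ℂ)
    (w : V → V → ℝ) : Matrix V V ℂ := fun i j => if G.Adj i j then φ i j * (w i j : ℂ) else 0

/-- Weighted adjacency matrix `A(G_w)` of the underlying weighted graph. -/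
def wAdj [Fintype V] [DecidableEq V] (G : SimpleGraph V) (w : V → V → ℝ) :
    Matrix V V ℂ := fun i j => if G.Adj i j then (w i j : ℂ) else 0


/-- Gain function of the associated complete gain graph `K^{D^max}(Φ)`: edges of `Φ` keep
their gains, non-adjacent pairs get the maximum auxiliary gain. -/
def kappaMax {V : Type*} [LinearOrder V] (G : SimpleGraph V) (φ : V → V → ℂ) :
    V → V → ℂ := fun s t =>
  if G.Adj s t then φ s t
  else if s < t then lexMaxGain (shortestGains G φ s t)
  else if t < s then (starRingEnd ℂ) (lexMaxGain (shortestGains G φ t s))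
  else 1

variable {G : SimpleGraph V} {φ : V → V → ℂ}

@[simp] lemma walkGain_nil {u : V} : walkGain φ (SimpleGraph.Walk.nil : G.Walk u u) = 1 := rfl

@[simp] lemma walkGain_cons {u v w : V} (h : G.Adj u v) (p : G.Walk v w) :
    walkGain φ (SimpleGraph.Walk.cons h p) = φ u v * walkGain φ p := by
  simp [walkGain]

@[simp] lemma walkGain_append {u v w : V} (p : G.Walk u v) (q : G.Walk v w) :
    walkGain φ (p.append q) = walkGain φ p * walkGain φ q := by
  simp [walkGain, SimpleGraph.Walk.darts_append]

lemma abs_walkGain (hφ : IsGain G φ) {u v : V} (p : G.Walk u v) :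
    ‖walkGain φ p‖ = 1 := by
  induction p with
  | nil => simp
  | cons h p ih => simp only [walkGain_cons, norm_mul, ih, hφ.1 _ _ h, mul_one]

lemma walkGain_ne_zero (hφ : IsGain G φ) {u v : V} (p : G.Walk u v) :
    walkGain φ p ≠ 0 := by
  intro h
  have := abs_walkGain hφ p
  rw [h] at this; simp at this

lemma walkGain_reverse (hφ : IsGain G φ) {u v : V} (p : G.Walk u v) :
    walkGain φ p.reverse = (walkGain φ p)⁻¹ := by
  induction p with
  | nil => simp
  | cons h p ih =>
      rw [SimpleGraph.Walk.reverse_cons]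
      simp [ih, hφ.2 _ _ h, mul_inv, mul_comm]

lemma walkGain_path_self (hφ : IsGain G φ) {u : V} (p : G.Walk u u) (hp : p.IsPath) :
    walkGain φ p = 1 := by
  cases p with
  | nil => simp
  | cons h q =>
      rw [SimpleGraph.Walk.cons_isPath_iff] at hp
      exact absurd q.end_mem_support hp.2

lemma cons_gain_one (hφ : IsGain G φ) (hb : GBalanced G φ) {u x : V} (h : G.Adj u x)
    (q : G.Walk x u) (hq : q.IsPath) : φ u x * walkGain φ q = 1 := by
  by_cases he : s(u, x) ∈ q.edges
  · cases q with
    | nil => simp at he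
    | @cons _ y _ h' r =>
        rw [SimpleGraph.Walk.cons_isPath_iff] at hq
        rw [SimpleGraph.Walk.edges_cons, List.mem_cons] at he
        rcases he with he | he
        · have hyu : y = u := by
            rw [Sym2.eq_iff] at he
            rcases he with ⟨h1, h2⟩ | ⟨h1, h2⟩
            · exact absurd h1 h.ne
            · exact h1.symm
          subst hyu
          have hrnil : walkGain φ r = 1 := walkGain_path_self hφ r hq.1
          rw [walkGain_cons, hrnil, mul_one, hφ.2 _ _ h]
          exact mul_inv_cancel₀ (by
            intro h0
            have := hφ.1 _ _ h
            rw [h0] at this; simp at this)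
        · exact absurd (r.fst_mem_support_of_mem_edges (by rwa [Sym2.eq_swap] at he)) hq.2
  · have hc : (SimpleGraph.Walk.cons h q).IsCycle := by
      rw [SimpleGraph.Walk.cons_isCycle_iff]
      exact ⟨hq, he⟩
    have := hb u _ hc
    rwa [walkGain_cons] at this

lemma walkGain_bypass (hφ : IsGain G φ) (hb : GBalanced G φ) {u v : V} (p : G.Walk u v) :
    walkGain φ p.bypass = walkGain φ p := by
  induction p with
  | nil => simp [SimpleGraph.Walk.bypass]
  | @cons u x v h p ih =>
      rw [SimpleGraph.Walk.bypass]
      by_cases hs : u ∈ p.bypass.support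
      · rw [dif_pos hs]
        have hspec := SimpleGraph.Walk.take_spec p.bypass hs
        have hgain : walkGain φ (p.bypass.takeUntil u hs) * walkGain φ (p.bypass.dropUntil u hs)
            = walkGain φ p.bypass := by rw [← walkGain_append, hspec]
        have key : φ u x * walkGain φ (p.bypass.takeUntil u hs) = 1 :=
          cons_gain_one hφ hb h _ ((p.bypass_isPath).takeUntil hs)
        calc walkGain φ (p.bypass.dropUntil u hs)
            = (φ u x * walkGain φ (p.bypass.takeUntil u hs)) *
              walkGain φ (p.bypass.dropUntil u hs) := by rw [key, one_mul]
          _ = φ u x * walkGain φ p.bypass := by rw [mul_assoc, hgain]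
          _ = walkGain φ (SimpleGraph.Walk.cons h p) := by rw [ih, walkGain_cons]
      · rw [dif_neg hs]
        simp [ih]

lemma walkGain_closed (hφ : IsGain G φ) (hb : GBalanced G φ) {u : V} (c : G.Walk u u) :
    walkGain φ c = 1 := by
  rw [← walkGain_bypass hφ hb]
  exact walkGain_path_self hφ _ c.bypass_isPath

lemma walkGain_eq_of_balanced (hφ : IsGain G φ) (hb : GBalanced G φ) {u v : V}
    (p q : G.Walk u v) : walkGain φ p = walkGain φ q := by
  have h1 : walkGain φ (p.append q.reverse) = 1 := walkGain_closed hφ hb _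
  rw [walkGain_append, walkGain_reverse hφ] at h1
  have h2 := walkGain_ne_zero hφ q
  field_simp at h1
  exact h1


lemma lexMaxGain_singleton (z : ℂ) : lexMaxGain {z} = z := by
  unfold lexMaxGain
  rw [Set.image_singleton, csSup_singleton]
  have h2 : {w ∈ ({z} : Set ℂ) | w.re = z.re} = {z} := by
    ext w; simp only [Set.mem_singleton_iff, Set.mem_setOf_eq, and_iff_left_iff_imp]
    rintro rfl; rfl
  rw [h2, Set.image_singleton, csSup_singleton]

lemma lexMinGain_singleton (z : ℂ) : lexMinGain {z} = z := by
  unfold lexMinGain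
  rw [Set.image_singleton, csInf_singleton]
  have h2 : {w ∈ ({z} : Set ℂ) | w.re = z.re} = {z} := by
    ext w; simp only [Set.mem_singleton_iff, Set.mem_setOf_eq, and_iff_left_iff_imp]
    rintro rfl; rfl
  rw [h2, Set.image_singleton, csInf_singleton]

lemma walkGain_mapLe [LinearOrder V] {u v : V} (p : G.Walk u v) :
    walkGain (kappaMax G φ) (p.mapLe le_top) = walkGain φ p := by
  induction p with
  | nil => rfl
  | @cons u x v h p ih =>
      have : (SimpleGraph.Walk.cons h p).mapLe (le_top : G ≤ ⊤)
          = SimpleGraph.Walk.cons (by simp [h.ne] : (⊤ : SimpleGraph V).Adj u x)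
              (p.mapLe le_top) := rfl
      rw [this, walkGain_cons, walkGain_cons, ih]
      congr 1
      unfold kappaMax
      rw [if_pos h]

/-- `Φ` is balanced iff `K^{D^max}(Φ)` is balanced; equivalently iff
`D^max(Φ) = D^min(Φ)` and the common complete gain graph `K^D(Φ)` is balanced. -/
theorem balanced_iff_complete_balanced {V : Type*} [Fintype V] [DecidableEq V]
    [LinearOrder V] (G : SimpleGraph V) (hconn : G.Connected) (φ : V → V → ℂ)
    (hφ : IsGain G φ) :
    (GBalanced G φ ↔ GBalanced (⊤ : SimpleGraph V) (kappaMax G φ)) ∧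
    (GBalanced G φ ↔
      (Dmax G φ (· < ·) = Dmin G φ (· < ·) ∧
        GBalanced (⊤ : SimpleGraph V) (kappaMax G φ))) := by
  -- backward: balanced complete graph implies balanced
  have hKtoG : GBalanced (⊤ : SimpleGraph V) (kappaMax G φ) → GBalanced G φ := by
    intro hb u c hc
    have hc' : (c.mapLe (le_top : G ≤ ⊤)).IsCycle := hc.mapLe _
    have h1 := hb u _ hc'
    rwa [walkGain_mapLe] at h1
  -- forward: balanced implies everything
  have main : GBalanced G φ →
      (Dmax G φ (· < ·) = Dmin G φ (· < ·) ∧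
        GBalanced (⊤ : SimpleGraph V) (kappaMax G φ)) := by
    intro hb
    choose W hWlen using fun s t => (hconn.exists_walk_length_eq_dist s t)
    set g : V → V → ℂ := fun s t => walkGain φ (W s t) with hgdef
    have hany : ∀ s t (p : G.Walk s t), walkGain φ p = g s t := fun s t p =>
      walkGain_eq_of_balanced hφ hb p (W s t)
    have hsing : ∀ s t, shortestGains G φ s t = {g s t} := by
      intro s t
      ext z
      constructor
      · rintro ⟨p, hp, rfl⟩
        exact hany s t p
      · rintro rfl
        exact ⟨W s t, hWlen s t, rfl⟩
    have hmax : ∀ s t, lexMaxGain (shortestGains G φ s t) = g s t := fun s t => by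
      rw [hsing, lexMaxGain_singleton]
    have hmin : ∀ s t, lexMinGain (shortestGains G φ s t) = g s t := fun s t => by
      rw [hsing, lexMinGain_singleton]
    have hone : ∀ s, g s s = 1 := fun s => (hany s s SimpleGraph.Walk.nil).symm
    have hmul : ∀ s t u, g s t * g t u = g s u := by
      intro s t u
      rw [← hany s u ((W s t).append (W t u)), walkGain_append, hany, hany]
    have habs : ∀ s t, ‖g s t‖ = 1 := fun s t => abs_walkGain hφ _
    have hne : ∀ s t, g s t ≠ 0 := by
      intro s t h0
      have := habs s t
      rw [h0] at this; simp at this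
    have hconj : ∀ s t, (starRingEnd ℂ) (g t s) = g s t := by
      intro s t
      have h1 : g t s * (starRingEnd ℂ) (g t s) = 1 := by
        rw [Complex.mul_conj, ← Complex.sq_norm, habs]
        norm_num
      have h2 : (starRingEnd ℂ) (g t s) = (g t s)⁻¹ := eq_inv_of_mul_eq_one_left (by
        rwa [mul_comm] at h1)
      rw [h2]
      exact inv_eq_of_mul_eq_one_right (by rw [mul_comm, hmul, hone])
    have hadj : ∀ s t, G.Adj s t → φ s t = g s t := by
      intro s t h
      have := hany s t (SimpleGraph.Walk.cons h SimpleGraph.Walk.nil)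
      simpa using this
    have hkg : ∀ s t, s ≠ t → kappaMax G φ s t = g s t := by
      intro s t hst
      unfold kappaMax
      split_ifs with h1 h2 h3
      · exact hadj _ _ h1
      · exact hmax s t
      · rw [hmax t s]; exact hconj s t
      · exact absurd (le_antisymm (not_lt.1 h3) (not_lt.1 h2)) hst
    constructor
    · funext s t
      unfold Dmax Dmin
      split_ifs with h1 h2
      · rw [hmax, hmin]
      · rw [hmax, hmin]
      · rfl
    · have htele : ∀ (u v : V) (p : (⊤ : SimpleGraph V).Walk u v),
          walkGain (kappaMax G φ) p = g u v := by
        intro u v p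
        induction p with
        | nil => exact (hone _).symm
        | @cons u x v h p ih =>
            rw [walkGain_cons, ih, hkg _ _ h.ne, hmul]
      intro u c _
      rw [htele, hone]
  exact ⟨⟨fun hb => (main hb).2, hKtoG⟩, ⟨main, fun h => hKtoG h.2⟩⟩


end GG
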